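/- Limit form of the belief-weighted value identity for nonnegative rewards: in a POMDP with reward function R satisfying R(s,α,s') ≥ 0 for all s, α, s' and observable goal set G, for every observation-based policy σ and every belief b over S with an observation, ⨆_{n∈ℕ} V_n^σ(b) = ∑_{s∈S} b(s)·(⨆_{n∈ℕ} W_n^σ(s)), where the suprema are taken in [0,∞] and the sum is evaluated in [0,∞] with coefficients b(s) ≥ 0. -/

import Mathlib

open Finset

attribute [local instance] Classical.propDecidable

noncomputable section

/-- A belief over a finite type `S`: a nonnegative function summing to one. -/
def IsBelief {S : Type} [Fintype S] (b : S → ℝ) : Prop :=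
  (∀ s, 0 ≤ b s) ∧ (∑ s, b s = 1)

/-- A belief clip for a belief `b`: `0 ≤ μ(s) ≤ b(s)` pointwise and `Σμ < 1`. -/
def IsBeliefClip {S : Type} [Fintype S] (b μ : S → ℝ) : Prop :=
  (∀ s, 0 ≤ μ s ∧ μ s ≤ b s) ∧ (∑ s, μ s < 1)

/-- The induced function `b ⊖ μ`, defined by `(b ⊖ μ)(s) = (b(s) − μ(s)) / (1 − Σμ)`. -/
def clipped {S : Type} [Fintype S] (b μ : S → ℝ) : S → ℝ :=
  fun s => (b s - μ s) / (1 - ∑ s', μ s')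

variable {S Act Z : Type}

/-- The set of actions enabled in state `s`: those whose outgoing probabilities sum to 1. -/
def enabledA [Fintype S] [Fintype Act] (P : S → Act → S → ℝ) (s : S) : Finset Act :=
  univ.filter fun α => ∑ s' : S, P s α s' = 1

/-- The actions enabled at an observation `z`: `Act(z) = Act(s)` for some `s` with `O s = z`. -/
def obsEnabled [Fintype S] [Fintype Act] (O : S → Z) (P : S → Act → S → ℝ) (z : Z) :
    Finset Act :=
  if h : ∃ s, O s = z then enabledA P h.choose else ∅

/-- The POMDP assumptions on the observation function `O` and the transition function `P`:
nonnegative transition probabilities, each state-action row sums to 0 or 1, every state has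
some enabled action, and equally-observed states have equal enabled actions. -/
def IsPOMDP [Fintype S] [Fintype Act] (O : S → Z) (P : S → Act → S → ℝ) : Prop :=
  (∀ s α s', 0 ≤ P s α s') ∧
  (∀ s α, (∑ s', P s α s') = 0 ∨ (∑ s', P s α s') = 1) ∧
  (∀ s, (enabledA P s).Nonempty) ∧
  (∀ s s', O s = O s' → enabledA P s = enabledA P s')

/-- `b` has observation `z`: the support of `b` is contained in `O⁻¹(z)`. -/
def HasObs (O : S → Z) (b : S → ℝ) (z : Z) : Prop :=
  ∀ s, 0 < b s → O s = z

/-- `P(s,α,z)`: probability to observe `z` after taking `α` in state `s`. -/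
def Pso [Fintype S] (O : S → Z) (P : S → Act → S → ℝ) (s : S) (α : Act) (z : Z) : ℝ :=
  ∑ s' : S, if O s' = z then P s α s' else 0

/-- `P(b,α,z)`: probability to observe `z` after taking `α` in belief `b`. -/
def Pbo [Fintype S] (O : S → Z) (P : S → Act → S → ℝ) (b : S → ℝ) (α : Act) (z : Z) : ℝ :=
  ∑ s : S, b s * Pso O P s α z

/-- The successor belief `⟦b|α,z⟧`. -/
def succB [Fintype S] (O : S → Z) (P : S → Act → S → ℝ) (b : S → ℝ) (α : Act) (z : Z) :
    S → ℝ :=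
  fun s => if O s = z then (∑ s' : S, b s' * P s' α s) / Pbo O P b α z else 0

/-- The belief reward `R(b,α,z)`. -/
def Rbel [Fintype S] (O : S → Z) (P R : S → Act → S → ℝ) (b : S → ℝ) (α : Act) (z : Z) : ℝ :=
  (∑ s : S, b s * ∑ s' : S, if O s' = z then R s α s' * P s α s' else 0) / Pbo O P b α z

/-- The last observation of a finite observation trace `z₀ α₁ z₁ … αₙ zₙ`,
represented as the pair of `z₀` and the list `[(α₁,z₁),…,(αₙ,zₙ)]`. -/
def lastObs (τ : Z × List (Act × Z)) : Z :=
  (τ.2.getLast?.map Prod.snd).getD τ.1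

/-- An observation-based policy: to each finite observation trace it assigns a probability
distribution over actions supported on the actions enabled at the last observation. -/
def IsObsPolicy [Fintype S] [Fintype Act] (O : S → Z) (P : S → Act → S → ℝ)
    (σ : Z × List (Act × Z) → Act → ℝ) : Prop :=
  ∀ τ, (∀ α, 0 ≤ σ τ α) ∧ (∑ α, σ τ α = 1) ∧
    (∀ α, σ τ α ≠ 0 → ∀ s, O s = lastObs τ → α ∈ enabledA P s)

/-- The shifted policy `σ⇝(z,α)`, behaving as `σ` after observing `z` and taking `α`. -/
def shiftPol (σ : Z × List (Act × Z) → Act → ℝ) (z : Z) (α : Act) :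
    Z × List (Act × Z) → Act → ℝ :=
  fun τ => σ (z, (α, τ.1) :: τ.2)

/-- Goal states are observable: membership in `G` is determined by the observation. -/
def ObservableGoal (O : S → Z) (G : Set S) : Prop :=
  ∃ Z' : Set Z, ∀ s, s ∈ G ↔ O s ∈ Z'

/-- The `n`-step state values `W_n^σ` under an observation-based policy `σ`. -/
def Wval [Fintype S] [Fintype Act] (O : S → Z) (P R : S → Act → S → ℝ) (G : Set S) :
    ℕ → (Z × List (Act × Z) → Act → ℝ) → S → ℝ
  | 0, _, _ => 0
  | n+1, σ, s =>
    if s ∈ G then 0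
    else ∑ α ∈ enabledA P s, σ (O s, []) α *
      ∑ s' : S, P s α s' * (R s α s' + Wval O P R G n (shiftPol σ (O s) α) s')

/-- The `n`-step belief values `V_n^σ(b)` under policy `σ`, for a belief `b` with
observation `z`. -/
def Vpol [Fintype S] [Fintype Act] [Fintype Z] (O : S → Z) (P R : S → Act → S → ℝ)
    (G : Set S) :
    ℕ → (Z × List (Act × Z) → Act → ℝ) → (S → ℝ) → Z → ℝ
  | 0, _, _, _ => 0
  | n+1, σ, b, z =>
    if ∀ s, 0 < b s → s ∈ G then 0
    else ∑ α ∈ obsEnabled O P z, σ (z, []) α *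
      ∑ z' ∈ univ.filter (fun z' => 0 < Pbo O P b α z'),
        Pbo O P b α z' *
          (Rbel O P R b α z' + Vpol O P R G n (shiftPol σ z α) (succB O P b α z') z')

/-- Maximum of `f` over a finite set (0 for the empty set). -/
def maxOver {α : Type} (t : Finset α) (f : α → ℝ) : ℝ :=
  if h : t.Nonempty then t.sup' h f else 0

/-- Minimum of `f` over a finite set (0 for the empty set). -/
def minOver {α : Type} (t : Finset α) (f : α → ℝ) : ℝ :=
  if h : t.Nonempty then t.inf' h f else 0

/-- The `n`-step optimal belief values `V_n(b)`, for a belief `b` with observation `z`. -/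
def Vopt [Fintype S] [Fintype Act] [Fintype Z] (O : S → Z) (P R : S → Act → S → ℝ)
    (G : Set S) :
    ℕ → (S → ℝ) → Z → ℝ
  | 0, _, _ => 0
  | n+1, b, z =>
    if ∀ s, 0 < b s → s ∈ G then 0
    else maxOver (obsEnabled O P z) fun α =>
      ∑ z' ∈ univ.filter (fun z' => 0 < Pbo O P b α z'),
        Pbo O P b α z' * (Rbel O P R b α z' + Vopt O P R G n (succB O P b α z') z')

/-- The `n`-step minimal values `U_n` on the underlying fully observable MDP. -/
def Umin [Fintype S] [Fintype Act] (P R : S → Act → S → ℝ) (G : Set S) : ℕ → S → ℝ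
  | 0, _ => 0
  | n+1, s =>
    if s ∈ G then 0
    else minOver (enabledA P s) fun α =>
      ∑ s' : S, P s α s' * (R s α s' + Umin P R G n s')

end


section AuxLemmas

variable {S Act Z : Type} [Fintype S] [Fintype Act] [Fintype Z]

lemma Wval_nonneg' (O : S → Z) (P R : S → Act → S → ℝ) (G : Set S)
    (hP : ∀ s α s', 0 ≤ P s α s') (hR : ∀ s α s', 0 ≤ R s α s') :
    ∀ (n : ℕ) (σ : Z × List (Act × Z) → Act → ℝ), (∀ τ α, 0 ≤ σ τ α) →
      ∀ s, 0 ≤ Wval O P R G n σ s := by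
  intro n
  induction n with
  | zero => intro σ _ s; simp [Wval]
  | succ n ih =>
    intro σ hσ s
    simp only [Wval]
    split
    · exact le_rfl
    · refine Finset.sum_nonneg fun α _ => mul_nonneg (hσ _ _) ?_
      refine Finset.sum_nonneg fun s' _ => mul_nonneg (hP _ _ _) ?_
      exact add_nonneg (hR _ _ _) (ih _ (fun τ β => hσ _ β) s')

lemma Wval_mono' (O : S → Z) (P R : S → Act → S → ℝ) (G : Set S)
    (hP : ∀ s α s', 0 ≤ P s α s') (hR : ∀ s α s', 0 ≤ R s α s') :
    ∀ (n : ℕ) (σ : Z × List (Act × Z) → Act → ℝ), (∀ τ α, 0 ≤ σ τ α) →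
      ∀ s, Wval O P R G n σ s ≤ Wval O P R G (n+1) σ s := by
  intro n
  induction n with
  | zero =>
    intro σ hσ s
    simpa [Wval] using Wval_nonneg' O P R G hP hR 1 σ hσ s
  | succ n ih =>
    intro σ hσ s
    conv_lhs => rw [Wval]
    conv_rhs => rw [Wval]
    split
    · exact le_rfl
    · refine Finset.sum_le_sum fun α _ => ?_
      refine mul_le_mul_of_nonneg_left ?_ (hσ _ _)
      refine Finset.sum_le_sum fun s' _ => ?_
      refine mul_le_mul_of_nonneg_left ?_ (hP _ _ _)
      exact add_le_add le_rfl (ih _ (fun τ β => hσ _ β) s')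

end AuxLemmas


section KeyLemma
variable {S Act Z : Type} [Fintype S] [Fintype Act] [Fintype Z]

lemma Pso_nonneg (O : S → Z) (P : S → Act → S → ℝ) (hP : ∀ s α s', 0 ≤ P s α s')
    (s : S) (α : Act) (z : Z) : 0 ≤ Pso O P s α z := by
  refine Finset.sum_nonneg fun s' _ => ?_
  split <;> simp [hP]

lemma Pbo_nonneg (O : S → Z) (P : S → Act → S → ℝ) (hP : ∀ s α s', 0 ≤ P s α s')
    (b : S → ℝ) (hb : ∀ s, 0 ≤ b s) (α : Act) (z : Z) : 0 ≤ Pbo O P b α z :=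
  Finset.sum_nonneg fun s _ => mul_nonneg (hb s) (Pso_nonneg O P hP s α z)

/-- numerator identity: `∑_{s : O s = z'} ∑_{s'} b s' P s' α s = Pbo`. -/
lemma succB_num (O : S → Z) (P : S → Act → S → ℝ) (b : S → ℝ) (α : Act) (z' : Z) :
    ∑ s : S, (if O s = z' then ∑ s' : S, b s' * P s' α s else 0) = Pbo O P b α z' := by
  have h1 : ∀ s : S, (if O s = z' then ∑ s' : S, b s' * P s' α s else 0)
      = ∑ s' : S, (if O s = z' then b s' * P s' α s else 0) := by
    intro s; split <;> simp
  simp only [h1, Pbo, Pso]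
  rw [Finset.sum_comm]
  refine Finset.sum_congr rfl fun s' _ => ?_
  rw [Finset.mul_sum]
  refine Finset.sum_congr rfl fun s _ => ?_
  split <;> simp


lemma succB_nonneg (O : S → Z) (P : S → Act → S → ℝ) (hP : ∀ s α s', 0 ≤ P s α s')
    (b : S → ℝ) (hb : ∀ s, 0 ≤ b s) (α : Act) (z' : Z) (hpos : 0 < Pbo O P b α z') :
    ∀ s, 0 ≤ succB O P b α z' s := by
  intro s
  rw [succB]
  split
  · exact div_nonneg (Finset.sum_nonneg fun s' _ => mul_nonneg (hb s') (hP _ _ _)) hpos.le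
  · exact le_rfl

lemma succB_sum (O : S → Z) (P : S → Act → S → ℝ)
    (b : S → ℝ) (α : Act) (z' : Z) (hpos : 0 < Pbo O P b α z') :
    ∑ s, succB O P b α z' s = 1 := by
  simp only [succB]
  have h1 : ∀ s : S, (if O s = z' then (∑ s' : S, b s' * P s' α s) / Pbo O P b α z' else 0)
      = (if O s = z' then (∑ s' : S, b s' * P s' α s) else 0) / Pbo O P b α z' := by
    intro s; split <;> simp
  simp only [h1]
  rw [← Finset.sum_div, succB_num, div_self hpos.ne']

lemma succB_hasObs (O : S → Z) (P : S → Act → S → ℝ)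
    (b : S → ℝ) (α : Act) (z' : Z) : HasObs O (succB O P b α z') z' := by
  intro s hs
  by_contra h
  rw [succB, if_neg h] at hs
  exact lt_irrefl 0 hs

lemma key_identity (O : S → Z) (P : S → Act → S → ℝ) (hM : IsPOMDP O P)
    (R : S → Act → S → ℝ) (G : Set S) (hG : ObservableGoal O G) :
    ∀ (n : ℕ) (σ : Z × List (Act × Z) → Act → ℝ) (b : S → ℝ) (z : Z),
      (∀ s, 0 ≤ b s) → HasObs O b z →
      Vpol O P R G n σ b z = ∑ s, b s * Wval O P R G n σ s := by
  have hP := hM.1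
  intro n
  induction n with
  | zero => intro σ b z _ _; simp [Vpol, Wval]
  | succ n ih =>
    intro σ b z hb0 hobs
    by_cases hgoal : ∀ s, 0 < b s → s ∈ G
    · rw [Vpol, if_pos hgoal]
      symm
      refine Finset.sum_eq_zero fun s _ => ?_
      rcases lt_or_eq_of_le (hb0 s) with h | h
      · rw [Wval, if_pos (hgoal s h), mul_zero]
      · rw [← h, zero_mul]
    · -- main case
      push_neg at hgoal
      obtain ⟨s0, hs0b, hs0G⟩ := hgoal
      have hOs0 : O s0 = z := hobs s0 hs0b
      obtain ⟨Z', hZ'⟩ := hG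
      have hzZ' : z ∉ Z' := fun h => hs0G ((hZ' s0).2 (hOs0 ▸ h))
      have hnotG : ∀ s, O s = z → s ∉ G := fun s hs hsG => hzZ' (hs ▸ (hZ' s).1 hsG)
      have hex : ∃ s, O s = z := ⟨s0, hOs0⟩
      have hA : ∀ s, O s = z → obsEnabled O P z = enabledA P s := by
        intro s hs
        rw [obsEnabled, dif_pos hex]
        exact hM.2.2.2 _ _ (hex.choose_spec.trans hs.symm)
      have hgoal2 : ¬ ∀ s, 0 < b s → s ∈ G := by
        intro h; exact hs0G (h s0 hs0b)
      rw [Vpol, if_neg hgoal2]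
      -- rewrite RHS
      have hRHS : ∑ s, b s * Wval O P R G (n+1) σ s
          = ∑ s, b s * ∑ α ∈ obsEnabled O P z, σ (z, []) α *
              ∑ s' : S, P s α s' * (R s α s' + Wval O P R G n (shiftPol σ z α) s') := by
        refine Finset.sum_congr rfl fun s _ => ?_
        rcases lt_or_eq_of_le (hb0 s) with h | h
        · have hOz : O s = z := hobs s h
          rw [Wval, if_neg (hnotG s hOz), hOz, ← hA s hOz]
        · rw [← h, zero_mul, zero_mul]
      rw [hRHS]
      -- swap the sums over s and α
      rw [show (∑ s, b s * ∑ α ∈ obsEnabled O P z, σ (z, []) α *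
              ∑ s' : S, P s α s' * (R s α s' + Wval O P R G n (shiftPol σ z α) s'))
          = ∑ α ∈ obsEnabled O P z, σ (z, []) α *
              ∑ s, b s * ∑ s' : S, P s α s' * (R s α s' + Wval O P R G n (shiftPol σ z α) s')
        from by
          simp only [Finset.mul_sum]
          rw [Finset.sum_comm]
          exact Finset.sum_congr rfl fun α _ => Finset.sum_congr rfl fun s _ =>
            Finset.sum_congr rfl fun s' _ => by ring]
      refine Finset.sum_congr rfl fun α _ => ?_
      congr 1
      -- per-action identity
      set σ' := shiftPol σ z α with hσ'
      set T : Z → ℝ := fun z' => ∑ s, b s *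
          ∑ s' : S, (if O s' = z' then P s α s' * (R s α s' + Wval O P R G n σ' s') else 0)
        with hT
      have hTsum : ∑ z' : Z, T z'
          = ∑ s, b s * ∑ s' : S, P s α s' * (R s α s' + Wval O P R G n σ' s') := by
        rw [Finset.sum_comm]
        refine Finset.sum_congr rfl fun s _ => ?_
        rw [← Finset.mul_sum]
        congr 1
        rw [Finset.sum_comm]
        refine Finset.sum_congr rfl fun s' _ => ?_
        simp
      rw [← hTsum]
      have hT0 : ∀ z' : Z, ¬ (0 < Pbo O P b α z') → T z' = 0 := by
        intro z' hnpos
        have hz0 : Pbo O P b α z' = 0 :=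
          le_antisymm (not_lt.1 hnpos) (Pbo_nonneg O P hP b hb0 α z')
        have hterm : ∀ s ∈ (univ : Finset S), b s * Pso O P s α z' = 0 := by
          rw [← Finset.sum_eq_zero_iff_of_nonneg
            (fun s _ => mul_nonneg (hb0 s) (Pso_nonneg O P hP s α z'))]
          exact hz0
        refine Finset.sum_eq_zero fun s _ => ?_
        rcases mul_eq_zero.1 (hterm s (mem_univ s)) with h | h
        · rw [h, zero_mul]
        · have hPso : ∀ s' ∈ (univ : Finset S), (if O s' = z' then P s α s' else 0) = 0 := by
            rw [← Finset.sum_eq_zero_iff_of_nonneg (fun s' _ => by split <;> simp [hP])]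
            exact h
          refine mul_eq_zero_of_right _ (Finset.sum_eq_zero fun s' _ => ?_)
          have := hPso s' (mem_univ s')
          split at this
          · simp only [if_pos ‹O s' = z'›, this, zero_mul]
          · rw [if_neg ‹¬ O s' = z'›]
      rw [← Finset.sum_filter_add_sum_filter_not univ (fun z' => 0 < Pbo O P b α z') T,
        Finset.sum_eq_zero (fun z' hz' => hT0 z' (mem_filter.1 hz').2), add_zero]
      refine Finset.sum_congr rfl fun z' hz' => ?_
      have hpos : 0 < Pbo O P b α z' := (mem_filter.1 hz').2
      -- V_n of the successor belief via IH
      have hIH : Vpol O P R G n σ' (succB O P b α z') z'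
          = ∑ s', succB O P b α z' s' * Wval O P R G n σ' s' :=
        ih σ' (succB O P b α z') z' (succB_nonneg O P hP b hb0 α z' hpos)
          (succB_hasObs O P b α z')
      have hrew : Pbo O P b α z' * Rbel O P R b α z'
          = ∑ s, b s * ∑ s' : S, (if O s' = z' then R s α s' * P s α s' else 0) := by
        rw [Rbel, mul_comm, div_mul_cancel₀ _ hpos.ne']
      have hcont : Pbo O P b α z' * (∑ s', succB O P b α z' s' * Wval O P R G n σ' s')
          = ∑ s, b s * ∑ s' : S, (if O s' = z' then P s α s' * Wval O P R G n σ' s' else 0) := by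
        rw [Finset.mul_sum]
        have h1 : ∀ s' : S, Pbo O P b α z' * (succB O P b α z' s' * Wval O P R G n σ' s')
            = ∑ s : S, (if O s' = z' then b s * (P s α s' * Wval O P R G n σ' s') else 0) := by
          intro s'
          by_cases hc : O s' = z'
          · simp only [succB, if_pos hc]
            have h2 : ∑ s : S, b s * (P s α s' * Wval O P R G n σ' s')
                = (∑ s : S, b s * P s α s') * Wval O P R G n σ' s' := by
              rw [Finset.sum_mul]
              exact Finset.sum_congr rfl fun s _ => by ring
            rw [h2]
            field_simp
          · simp [succB, if_neg hc]
        simp only [h1]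
        rw [Finset.sum_comm]
        refine Finset.sum_congr rfl fun s _ => ?_
        rw [Finset.mul_sum]
        refine Finset.sum_congr rfl fun s' _ => ?_
        split <;> simp
      rw [hIH, mul_add, hrew, hcont, hT, ← Finset.sum_add_distrib]
      refine Finset.sum_congr rfl fun s _ => ?_
      rw [← mul_add, ← Finset.sum_add_distrib]
      congr 1
      refine Finset.sum_congr rfl fun s' _ => ?_
      split <;> ring

end KeyLemma

set_option maxHeartbeats 1000000 in
/-- limit form of the belief-weighted value identity for nonnegative rewards,
with suprema and the sum taken in `[0,∞]`. -/
theorem stmt_11 {S Act Z : Type} [Fintype S] [Nonempty S] [Fintype Act] [Nonempty Act]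
    [Fintype Z] [Nonempty Z]
    (O : S → Z) (P : S → Act → S → ℝ) (hM : IsPOMDP O P)
    (R : S → Act → S → ℝ) (G : Set S) (hR : ∀ s α s', 0 ≤ R s α s')
    (hG : ObservableGoal O G)
    (σ : Z × List (Act × Z) → Act → ℝ) (hσ : IsObsPolicy O P σ)
    (b : S → ℝ) (z : Z) (hb : IsBelief b) (hobs : HasObs O b z) :
    (⨆ n : ℕ, ENNReal.ofReal (Vpol O P R G n σ b z)) =
      ∑ s, ENNReal.ofReal (b s) * ⨆ n : ℕ, ENNReal.ofReal (Wval O P R G n σ s) := by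
  have hP := hM.1
  have hσ0 : ∀ τ α, 0 ≤ σ τ α := fun τ α => (hσ τ).1 α
  have key : ∀ n, Vpol O P R G n σ b z = ∑ s, b s * Wval O P R G n σ s :=
    fun n => key_identity O P hM R G hG n σ b z hb.1 hobs
  have hW0 : ∀ n s, 0 ≤ Wval O P R G n σ s :=
    fun n s => Wval_nonneg' O P R G hP hR n σ hσ0 s
  have hWmono : ∀ s : S, Monotone fun n : ℕ =>
      ENNReal.ofReal (b s) * ENNReal.ofReal (Wval O P R G n σ s) := by
    intro s
    have hm : Monotone fun n => Wval O P R G n σ s :=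
      monotone_nat_of_le_succ fun n => Wval_mono' O P R G hP hR n σ hσ0 s
    intro m n hmn
    exact mul_le_mul' le_rfl (ENNReal.ofReal_le_ofReal (hm hmn))
  calc (⨆ n : ℕ, ENNReal.ofReal (Vpol O P R G n σ b z))
      = ⨆ n : ℕ, ∑ s, ENNReal.ofReal (b s) * ENNReal.ofReal (Wval O P R G n σ s) := by
        refine iSup_congr fun n => ?_
        rw [key n, ENNReal.ofReal_sum_of_nonneg (fun s _ => mul_nonneg (hb.1 s) (hW0 n s))]
        exact Finset.sum_congr rfl fun s _ => ENNReal.ofReal_mul (hb.1 s)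
    _ = ∑ s, ⨆ n : ℕ, ENNReal.ofReal (b s) * ENNReal.ofReal (Wval O P R G n σ s) :=
        (ENNReal.finsetSum_iSup_of_monotone fun s => hWmono s).symm
    _ = ∑ s, ENNReal.ofReal (b s) * ⨆ n : ℕ, ENNReal.ofReal (Wval O P R G n σ s) :=
        Finset.sum_congr rfl fun s _ => (ENNReal.mul_iSup _ _).symm
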